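/- For X = T/K, the sets of T(t,x)-fixed loops satisfy: (L²X)^{T(t,x)} and (L²X)^{T(t',x')} (with x = x₁t₁+x₂t₂, x' = x₁'t₁'+x₂'t₂') are equal if (x₁,x₂) and (x₁',x₂') lie in the same connected component of exp_{T×T}^{-1}(K×K), and are disjoint otherwise; in particular two such fixed loop spaces intersect nontrivially only if they are equal. -/

import Mathlib

set_option synthInstance.maxHeartbeats 800000
set_option maxHeartbeats 1000000
set_option linter.unusedSectionVars false
set_option linter.unusedTactic false
set_option linter.unnecessarySimpa false

open Filter Topology

section general

variable {E : Type*} [NormedAddCommGroup E] [NormedSpace ℝ E] [FiniteDimensional ℝ E]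

/-- The "Lie algebra" of a closed subgroup: vectors whose whole line lies in `S`. -/
def lieOf (S : AddSubgroup E) : Submodule ℝ E where
  carrier := {v | ∀ t : ℝ, t • v ∈ S}
  add_mem' := by
    intro a b ha hb t
    rw [smul_add]; exact S.add_mem (ha t) (hb t)
  zero_mem' := by intro t; rw [smul_zero]; exact S.zero_mem
  smul_mem' := by intro c v hv t; rw [smul_smul]; exact hv (t * c)

lemma mem_lieOf {S : AddSubgroup E} {v : E} : v ∈ lieOf S ↔ ∀ t : ℝ, t • v ∈ S := Iff.rfl

lemma exists_small_subset_lieOf (S : AddSubgroup E) (hS : IsClosed (S : Set E)) :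
    ∃ ε > 0, ∀ g ∈ S, ‖g‖ < ε → g ∈ lieOf S := by
  obtain ⟨C, hC⟩ := Submodule.exists_isCompl (lieOf S)
  have hCclosed : IsClosed (C : Set E) := C.closed_of_finiteDimensional
  have key : ∃ ε > 0, ∀ d ∈ S, d ∈ C → ‖d‖ < ε → d = 0 := by
    by_contra h
    push_neg at h
    choose d hdS hdC hdlt hdne using fun k : ℕ => h (1 / (k + 1)) (by positivity)
    have hnorm : ∀ k, ‖d k‖ ≠ 0 := fun k => norm_ne_zero_iff.mpr (hdne k)
    set u : ℕ → E := fun k => ‖d k‖⁻¹ • d k with hu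
    have husph : ∀ k, u k ∈ Metric.sphere (0 : E) 1 := by
      intro k
      simp [hu, norm_smul, inv_mul_cancel₀ (hnorm k)]
    obtain ⟨u₀, hu₀, φ, hφ, hconv⟩ := (isCompact_sphere (0 : E) 1).tendsto_subseq husph
    have hr : Tendsto (fun j => ‖d (φ j)‖) atTop (𝓝 0) := by
      apply squeeze_zero (fun j => norm_nonneg _) (fun j => (hdlt (φ j)).le.trans ?_)
      · exact tendsto_one_div_add_atTop_nhds_zero_nat
      · apply one_div_le_one_div_of_le (by positivity)
        have hle : j ≤ φ j := hφ.le_apply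
        push_cast; exact_mod_cast by exact_mod_cast add_le_add_left (Nat.cast_le.mpr hle : (j:ℝ) ≤ φ j) 1
    have hdu : ∀ k, d k = ‖d k‖ • u k := by
      intro k
      rw [hu]; rw [smul_smul, mul_inv_cancel₀ (hnorm k), one_smul]
    have hline : ∀ t : ℝ, t • u₀ ∈ S := by
      intro t
      set m : ℕ → ℤ := fun j => ⌊t / ‖d (φ j)‖⌋ with hm
      have hmem : ∀ j, ((m j : ℝ) * ‖d (φ j)‖) • u (φ j) ∈ S := by
        intro j
        have : ((m j : ℝ) * ‖d (φ j)‖) • u (φ j) = (m j : ℝ) • d (φ j) := by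
          simp only [hu]
          rw [smul_smul, mul_assoc, mul_inv_cancel₀ (hnorm (φ j)), mul_one]
        rw [this, Int.cast_smul_eq_zsmul]
        exact zsmul_mem (hdS (φ j)) _
      have hsc : Tendsto (fun j => (m j : ℝ) * ‖d (φ j)‖) atTop (𝓝 t) := by
        rw [tendsto_iff_norm_sub_tendsto_zero]
        apply squeeze_zero (fun j => norm_nonneg _) _ hr
        intro j
        have h0 : (0:ℝ) < ‖d (φ j)‖ := (hnorm (φ j)).symm.lt_of_le (norm_nonneg _)
        have h1 : (m j : ℝ) ≤ t / ‖d (φ j)‖ := Int.floor_le _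
        have h2 : t / ‖d (φ j)‖ < m j + 1 := Int.lt_floor_add_one _
        rw [Real.norm_eq_abs, abs_le]
        rw [div_lt_iff₀ h0] at h2
        rw [le_div_iff₀ h0] at h1
        constructor <;> nlinarith
      have := hsc.smul hconv
      exact hS.mem_of_tendsto this (Eventually.of_forall hmem)
    have hu₀C : u₀ ∈ C := by
      refine hCclosed.mem_of_tendsto hconv (Eventually.of_forall fun j => ?_)
      exact C.smul_mem _ (hdC (φ j))
    have : u₀ = 0 := by
      have : u₀ ∈ lieOf S ⊓ C := ⟨hline, hu₀C⟩
      rwa [hC.inf_eq_bot, Submodule.mem_bot] at this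
    rw [this] at hu₀
    simp at hu₀
  obtain ⟨ε, hε, hkey⟩ := key
  set π : E →ₗ[ℝ] C := Submodule.projectionOnto C (lieOf S) hC.symm with hπ
  set πc : E →L[ℝ] C := π.toContinuousLinearMap with hπc
  refine ⟨ε / (‖πc‖ + 1), by positivity, fun g hg hglt => ?_⟩
  have hker : g - (π g : E) ∈ lieOf S := by
    rw [← Submodule.projectionOnto_apply_eq_zero_iff (q := lieOf S) hC.symm]
    rw [map_sub]
    simp [hπ, Submodule.projectionOnto_apply_left hC.symm (π g), Submodule.projectionOnto_projection]
  have hsub : g - (π g : E) ∈ S := by simpa using hker 1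
  have hπgS : (π g : E) ∈ S := by
    have : (π g : E) = g - (g - (π g : E)) := (sub_sub_cancel g _).symm
    rw [this]
    exact S.sub_mem hg hsub
  have hπnorm : ‖(π g : E)‖ < ε := by
    have h1 : ‖πc g‖ ≤ ‖πc‖ * ‖g‖ := πc.le_opNorm g
    have h2 : ‖πc g‖ = ‖(π g : E)‖ := rfl
    have hn : (0:ℝ) ≤ ‖πc‖ := ContinuousLinearMap.opNorm_nonneg πc
    calc ‖(π g : E)‖ ≤ ‖πc‖ * ‖g‖ := by rw [← h2]; exact h1
      _ ≤ (‖πc‖ + 1) * ‖g‖ := by nlinarith [norm_nonneg g]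
      _ < (‖πc‖ + 1) * (ε / (‖πc‖ + 1)) := by
          apply mul_lt_mul_of_pos_left hglt (by positivity)
      _ = ε := by field_simp
  have : (π g : E) = 0 := hkey _ hπgS (π g).2 hπnorm
  have h2 : g - (π g : E) = g := by rw [this, sub_zero]
  rwa [h2] at hker

lemma connectedComponentIn_addSubgroup (S : AddSubgroup E) (hS : IsClosed (S : Set E))
    {x : E} (hx : x ∈ S) :
    connectedComponentIn (S : Set E) x = {y | y - x ∈ lieOf S} := by
  apply Set.Subset.antisymm
  · -- via clopen set in subtype
    obtain ⟨ε, hε, hkey⟩ := exists_small_subset_lieOf S hS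
    rw [connectedComponentIn_eq_image hx]
    have hWclosed : IsClosed ((lieOf S : Submodule ℝ E) : Set E) :=
      (lieOf S).closed_of_finiteDimensional
    set U : Set (S : Set E) := {y | (y : E) - x ∈ lieOf S} with hU
    have hclopen : IsClopen U := by
      constructor
      · -- closed
        have : U = (fun y : (S : Set E) => (y : E) - x) ⁻¹' (lieOf S : Set E) := rfl
        rw [this]
        exact hWclosed.preimage (by fun_prop)
      · rw [Metric.isOpen_iff]
        intro y hy
        refine ⟨ε, hε, fun z hz => ?_⟩
        have hdist : ‖(z : E) - (y : E)‖ < ε := by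
          rw [Metric.mem_ball, Subtype.dist_eq, dist_eq_norm] at hz
          exact hz
        have hzy : (z : E) - (y : E) ∈ S := S.sub_mem z.2 y.2
        have h1 : (z : E) - (y : E) ∈ lieOf S := hkey _ hzy hdist
        have : (z : E) - x = ((z : E) - (y : E)) + ((y : E) - x) := by abel
        exact Set.mem_setOf.mpr (this ▸ (lieOf S).add_mem h1 hy)
    have hxU : (⟨x, hx⟩ : (S : Set E)) ∈ U := by
      show x - x ∈ lieOf S
      simpa [sub_self] using (lieOf S).zero_mem
    have hsub := IsClopen.connectedComponent_subset hclopen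
        (x := (⟨x, hx⟩ : (S : Set E))) hxU
    intro y hy
    obtain ⟨y', hy', rfl⟩ := hy
    exact hsub hy'
  · -- convex hence connected
    have hconv : Convex ℝ {y : E | y - x ∈ lieOf S} := by
      intro y hy y' hy' a b ha hb hab
      have key : a • y + b • y' - x = a • (y - x) + b • (y' - x) := by
        have h2 : a • (y - x) + b • (y' - x) = a • y + b • y' - (a + b) • x := by
          rw [smul_sub, smul_sub, add_smul]; abel
        rw [h2, hab, one_smul]
      exact Set.mem_setOf.mpr (key ▸
        (lieOf S).add_mem ((lieOf S).smul_mem a hy) ((lieOf S).smul_mem b hy'))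
    apply hconv.isPreconnected.subset_connectedComponentIn
    · show x - x ∈ lieOf S
      simpa [sub_self] using (lieOf S).zero_mem
    · intro y hy
      have h1 : y - x ∈ S := by simpa using (Set.mem_setOf.mp hy) 1
      have h2 : y = (y - x) + x := by abel
      rw [h2]
      exact S.add_mem h1 hx

end general



noncomputable section

/-- The circle `𝕋 = ℝ/ℤ`. -/
abbrev 𝕊 : Type := UnitAddCircle

/-- The compact torus of rank `n`. -/
abbrev Tor (n : ℕ) : Type := Fin n → 𝕊

/-- The exponential map `𝔱 = ℝⁿ → T = (ℝ/ℤ)ⁿ`. -/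
def expT {n : ℕ} (x : Fin n → ℝ) : Tor n := fun i => (x i : 𝕊)

/-- The two-parameter homomorphism `(r₁,r₂) ↦ (exp(r₁), exp(r₂), exp_T(x₁r₁ + x₂r₂))`
into `𝕋² × T`. -/
def onePar {n : ℕ} (x₁ x₂ : Fin n → ℝ) (r₁ r₂ : ℝ) : (𝕊 × 𝕊) × Tor n :=
  (((r₁ : 𝕊), (r₂ : 𝕊)), expT (r₁ • x₁ + r₂ • x₂))

/-- The closed subgroup `T(t,x) ⊆ 𝕋² × T`: the closure of
`{(exp(r₁), exp(r₂), exp_T(x₁r₁ + x₂r₂)) | r₁, r₂ ∈ ℝ}`. -/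
def Ttx {n : ℕ} (x₁ x₂ : Fin n → ℝ) : AddSubgroup ((𝕊 × 𝕊) × Tor n) :=
  (AddSubgroup.closure (Set.range fun p : ℝ × ℝ => onePar x₁ x₂ p.1 p.2)).topologicalClosure

/-- The closed subgroup `T(a) = ⟨exp_T(x₁), exp_T(x₂)⟩ ⊆ T`. -/
def Ta {n : ℕ} (x₁ x₂ : Fin n → ℝ) : AddSubgroup (Tor n) :=
  (AddSubgroup.closure ({expT x₁, expT x₂} : Set (Tor n))).topologicalClosure

/-- The exponential map `𝔱 × 𝔱 → T × T`. -/
def exp2 {n : ℕ} (p : (Fin n → ℝ) × (Fin n → ℝ)) : Tor n × Tor n := (expT p.1, expT p.2)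

/-- The fixed loop space `(L²(T/K))^{T(t,x)} = {s ↦ exp_T(x₁s₁ + x₂s₂)·z | z ∈ T/K}`
(automatically empty unless `exp_T(x₁), exp_T(x₂) ∈ K`). -/
def fixedLoops {n : ℕ} (K : AddSubgroup (Tor n)) (x₁ x₂ : Fin n → ℝ) :
    Set ((𝕊 × 𝕊) → Tor n ⧸ K) :=
  {γ | ∃ z : Tor n ⧸ K, ∀ s₁ s₂ : ℝ,
    γ ((s₁ : 𝕊), (s₂ : 𝕊)) = QuotientAddGroup.mk (expT (s₁ • x₁ + s₂ • x₂)) + z}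

/-- `expT` as an additive homomorphism. -/
def expTHom (n : ℕ) : (Fin n → ℝ) →+ Tor n where
  toFun := expT
  map_zero' := by funext i; simp [expT]
  map_add' := by intro a b; funext i; simp [expT]

lemma expT_add {n : ℕ} (a b : Fin n → ℝ) : expT (a + b) = expT a + expT b :=
  map_add (expTHom n) a b

lemma expT_sub {n : ℕ} (a b : Fin n → ℝ) : expT (a - b) = expT a - expT b :=
  map_sub (expTHom n) a b

lemma expT_continuous (n : ℕ) : Continuous (expT (n := n)) := by
  apply continuous_pi
  intro i
  exact continuous_quotient_mk'.comp (continuous_apply i)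

lemma overlap {n : ℕ} (K : AddSubgroup (Tor n)) {x₁ x₂ x₁' x₂' : Fin n → ℝ}
    {γ : (𝕊 × 𝕊) → Tor n ⧸ K}
    (h : γ ∈ fixedLoops K x₁ x₂) (h' : γ ∈ fixedLoops K x₁' x₂') :
    (∀ t : ℝ, expT (t • (x₁' - x₁)) ∈ K) ∧ (∀ t : ℝ, expT (t • (x₂' - x₂)) ∈ K) := by
  obtain ⟨z, hz⟩ := h
  obtain ⟨z', hz'⟩ := h'
  have h0 : z = z' := by
    have e1 := hz 0 0
    have e2 := hz' 0 0
    rw [e1] at e2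
    simpa [expT] using e2
  have key : ∀ s₁ s₂ : ℝ, (QuotientAddGroup.mk (expT (s₁ • x₁ + s₂ • x₂)) : Tor n ⧸ K)
      = QuotientAddGroup.mk (expT (s₁ • x₁' + s₂ • x₂')) := by
    intro s₁ s₂
    have e1 := hz s₁ s₂
    have e2 := hz' s₁ s₂
    rw [h0] at e1
    rw [e1] at e2
    exact add_right_cancel e2
  constructor
  · intro t
    have := key t 0
    rw [QuotientAddGroup.eq] at this
    have harg : (t • x₁' + (0:ℝ) • x₂') - (t • x₁ + (0:ℝ) • x₂) = t • (x₁' - x₁) := by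
      module
    have heq : -expT (t • x₁ + (0:ℝ) • x₂) + expT (t • x₁' + (0:ℝ) • x₂')
        = expT (t • (x₁' - x₁)) := by
      rw [neg_add_eq_sub, ← expT_sub, harg]
    rwa [heq] at this
  · intro t
    have := key 0 t
    rw [QuotientAddGroup.eq] at this
    have harg : ((0:ℝ) • x₁' + t • x₂') - ((0:ℝ) • x₁ + t • x₂) = t • (x₂' - x₂) := by
      module
    have heq : -expT ((0:ℝ) • x₁ + t • x₂) + expT ((0:ℝ) • x₁' + t • x₂')
        = expT (t • (x₂' - x₂)) := by
      rw [neg_add_eq_sub, ← expT_sub, harg]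
    rwa [heq] at this

lemma subset_of_lie {n : ℕ} (K : AddSubgroup (Tor n)) {x₁ x₂ x₁' x₂' : Fin n → ℝ}
    (h1 : ∀ t : ℝ, expT (t • (x₁' - x₁)) ∈ K) (h2 : ∀ t : ℝ, expT (t • (x₂' - x₂)) ∈ K) :
    fixedLoops K x₁ x₂ ⊆ fixedLoops K x₁' x₂' := by
  rintro γ ⟨z, hz⟩
  refine ⟨z, fun s₁ s₂ => ?_⟩
  rw [hz s₁ s₂]
  congr 1
  rw [QuotientAddGroup.eq]
  have harg : (s₁ • x₁' + s₂ • x₂') - (s₁ • x₁ + s₂ • x₂)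
      = s₁ • (x₁' - x₁) + s₂ • (x₂' - x₂) := by module
  have heq : -expT (s₁ • x₁ + s₂ • x₂) + expT (s₁ • x₁' + s₂ • x₂')
      = expT (s₁ • (x₁' - x₁)) + expT (s₂ • (x₂' - x₂)) := by
    rw [← expT_add, neg_add_eq_sub, ← expT_sub, harg]
  rw [heq]
  exact K.add_mem (h1 s₁) (h2 s₂)

lemma mem_of_fixedLoops {n : ℕ} (K : AddSubgroup (Tor n)) {x₁ x₂ : Fin n → ℝ}
    {γ : (𝕊 × 𝕊) → Tor n ⧸ K} (h : γ ∈ fixedLoops K x₁ x₂) :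
    expT x₁ ∈ K ∧ expT x₂ ∈ K := by
  obtain ⟨z, hz⟩ := h
  have hco : ((1 : ℝ) : 𝕊) = ((0 : ℝ) : 𝕊) := by
    rw [AddCircle.coe_period]
    simp
  constructor
  · have e1 := hz 1 0
    have e0 := hz 0 0
    rw [hco] at e1
    rw [e0] at e1
    have : (QuotientAddGroup.mk (expT ((1:ℝ) • x₁ + (0:ℝ) • x₂)) : Tor n ⧸ K)
        = QuotientAddGroup.mk (expT ((0:ℝ) • x₁ + (0:ℝ) • x₂)) := (add_right_cancel e1.symm)
    simp only [one_smul, zero_smul, add_zero, zero_add] at this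
    rw [QuotientAddGroup.eq] at this
    have h0 : expT ((0 : Fin n → ℝ)) = 0 := map_zero (expTHom n)
    rw [h0] at this
    simpa using K.neg_mem this
  · have e1 := hz 0 1
    have e0 := hz 0 0
    rw [hco] at e1
    rw [e0] at e1
    have : (QuotientAddGroup.mk (expT ((0:ℝ) • x₁ + (1:ℝ) • x₂)) : Tor n ⧸ K)
        = QuotientAddGroup.mk (expT ((0:ℝ) • x₁ + (0:ℝ) • x₂)) := (add_right_cancel e1.symm)
    simp only [one_smul, zero_smul, add_zero, zero_add] at this
    rw [QuotientAddGroup.eq] at this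
    have h0 : expT ((0 : Fin n → ℝ)) = 0 := map_zero (expTHom n)
    rw [h0] at this
    simpa using K.neg_mem this

/-- For `X = T/K`, the fixed loop spaces `(L²X)^{T(t,x)}` and
`(L²X)^{T(t',x')}` are equal if `(x₁,x₂)` and `(x₁',x₂')` lie in the same connected
component of `exp_{T×T}⁻¹(K × K)`, and are disjoint otherwise; in particular two such
fixed loop spaces intersect nontrivially only if they are equal. -/
theorem stmt_19 {n : ℕ} (K : AddSubgroup (Tor n)) (hK : IsClosed (K : Set (Tor n)))
    (x₁ x₂ x₁' x₂' : Fin n → ℝ) :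
    ((x₁', x₂') ∈ connectedComponentIn
        (exp2 (n := n) ⁻¹' ((K : Set (Tor n)) ×ˢ (K : Set (Tor n)))) (x₁, x₂) →
      fixedLoops K x₁ x₂ = fixedLoops K x₁' x₂') ∧
    ((x₁', x₂') ∉ connectedComponentIn
        (exp2 (n := n) ⁻¹' ((K : Set (Tor n)) ×ˢ (K : Set (Tor n)))) (x₁, x₂) →
      Disjoint (fixedLoops K x₁ x₂) (fixedLoops K x₁' x₂')) := by
  classical
  set P : Set ((Fin n → ℝ) × (Fin n → ℝ)) :=
    exp2 (n := n) ⁻¹' ((K : Set (Tor n)) ×ˢ (K : Set (Tor n))) with hP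
  set S : AddSubgroup ((Fin n → ℝ) × (Fin n → ℝ)) :=
    (K.prod K).comap ((expTHom n).prodMap (expTHom n)) with hSdef
  have hmemS : ∀ p : (Fin n → ℝ) × (Fin n → ℝ),
      p ∈ S ↔ (expT p.1 ∈ K ∧ expT p.2 ∈ K) := by
    intro p
    rw [hSdef, AddSubgroup.mem_comap, AddSubgroup.mem_prod]
    exact Iff.rfl
  have hset : (S : Set ((Fin n → ℝ) × (Fin n → ℝ))) = P := by
    ext p
    rw [SetLike.mem_coe, hmemS p, hP]
    exact Iff.rfl
  have hexp2cont : Continuous (exp2 (n := n)) := by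
    have : exp2 (n := n) = fun p => (expT p.1, expT p.2) := rfl
    rw [this]
    exact ((expT_continuous n).comp continuous_fst).prodMk
      ((expT_continuous n).comp continuous_snd)
  have hScl : IsClosed (S : Set ((Fin n → ℝ) × (Fin n → ℝ))) := by
    rw [hset, hP]
    exact (hK.prod hK).preimage hexp2cont
  by_cases hx : (x₁, x₂) ∈ P
  · -- base point in the preimage
    have hxS : (x₁, x₂) ∈ S := by rw [← SetLike.mem_coe, hset]; exact hx
    have hcomp : connectedComponentIn P (x₁, x₂)
        = {y | y - (x₁, x₂) ∈ lieOf S} := by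
      rw [← hset]
      exact connectedComponentIn_addSubgroup S hScl hxS
    have hmemLie : ∀ y₁ y₂ : Fin n → ℝ,
        ((y₁, y₂) - (x₁, x₂) ∈ lieOf S) ↔
          ((∀ t : ℝ, expT (t • (y₁ - x₁)) ∈ K) ∧ (∀ t : ℝ, expT (t • (y₂ - x₂)) ∈ K)) := by
      intro y₁ y₂
      constructor
      · intro h
        constructor
        · intro t
          have := (hmemS _).mp (h t)
          exact this.1
        · intro t
          have := (hmemS _).mp (h t)
          exact this.2
      · rintro ⟨h1, h2⟩ t
        exact (hmemS _).mpr ⟨h1 t, h2 t⟩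
    constructor
    · intro h
      rw [hcomp] at h
      obtain ⟨h1, h2⟩ := (hmemLie x₁' x₂').mp h
      have h1' : ∀ t : ℝ, expT (t • (x₁ - x₁')) ∈ K := by
        intro t
        have : t • (x₁ - x₁') = (-t) • (x₁' - x₁) := by module
        rw [this]
        exact h1 (-t)
      have h2' : ∀ t : ℝ, expT (t • (x₂ - x₂')) ∈ K := by
        intro t
        have : t • (x₂ - x₂') = (-t) • (x₂' - x₂) := by module
        rw [this]
        exact h2 (-t)
      exact Set.Subset.antisymm (subset_of_lie K h1 h2) (subset_of_lie K h1' h2')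
    · intro hnot
      rw [Set.disjoint_left]
      intro γ hγ hγ'
      apply hnot
      rw [hcomp]
      obtain ⟨h1, h2⟩ := overlap K hγ hγ'
      exact (hmemLie x₁' x₂').mpr ⟨h1, h2⟩
  · -- base point not in the preimage: empty component, and first set empty
    have hempty : connectedComponentIn P (x₁, x₂) = ∅ := connectedComponentIn_eq_empty hx
    constructor
    · intro h
      rw [hempty] at h
      exact absurd h (Set.notMem_empty _)
    · intro _
      rw [Set.disjoint_left]
      intro γ hγ _
      obtain ⟨h1, h2⟩ := mem_of_fixedLoops K hγ
      exact hx (Set.mk_mem_prod h1 h2)
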